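/- Let Y and Z be random vectors in ℝ^d with E(‖Y‖²) < ∞ and E(‖Z‖²) < ∞. Then E( ‖Y+Z‖² min{‖Y+Z‖, 1} ) ≤ 8 E( ‖Y‖² min{‖Y‖, 1} ) + 8 E( ‖Z‖² min{‖Z‖, 1} ). Moreover, with μ := EY, E( ‖Y−μ‖² min{‖Y−μ‖, 1} ) ≤ 16 E( ‖Y‖² min{‖Y‖, 1} ). -/

import Mathlib

open MeasureTheory Filter Topology
open scoped ProbabilityTheory

noncomputable section

/-- `ℝ^d` as a pi type. -/
abbrev Vec (d : ℕ) := Fin d → ℝ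

/-- The Euclidean norm on `ℝ^d`. -/
def euclNorm {d : ℕ} (z : Vec d) : ℝ := Real.sqrt (∑ i, z i ^ 2)

/- ### Auxiliary lemmas -/

lemma euclNorm_eq_norm {d : ℕ} (z : Vec d) :
    euclNorm z = ‖(EuclideanSpace.equiv (Fin d) ℝ).symm z‖ := by
  simp [euclNorm, EuclideanSpace.norm_eq, Real.norm_eq_abs, sq_abs]

lemma euclNorm_nonneg {d : ℕ} (z : Vec d) : 0 ≤ euclNorm z := Real.sqrt_nonneg _

lemma euclNorm_continuous {d : ℕ} : Continuous (euclNorm (d := d)) := by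
  simp only [funext euclNorm_eq_norm]
  exact (EuclideanSpace.equiv (Fin d) ℝ).symm.continuous.norm

lemma pi_norm_le_euclNorm {d : ℕ} (z : Vec d) : ‖z‖ ≤ euclNorm z := by
  rw [pi_norm_le_iff_of_nonneg (euclNorm_nonneg z)]
  intro i
  rw [Real.norm_eq_abs, ← Real.sqrt_sq_eq_abs]
  exact Real.sqrt_le_sqrt (Finset.single_le_sum (f := fun j => z j ^ 2)
    (fun j _ => sq_nonneg _) (Finset.mem_univ i))

lemma g_nonneg {x : ℝ} (hx : 0 ≤ x) : 0 ≤ x ^ 2 * min x 1 :=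
  mul_nonneg (sq_nonneg x) (le_min hx zero_le_one)

lemma g_le_sq (x : ℝ) : x ^ 2 * min x 1 ≤ x ^ 2 :=
  mul_le_of_le_one_right (sq_nonneg x) (min_le_right _ _)

lemma g_mono {a b : ℝ} (ha : 0 ≤ a) (hab : a ≤ b) :
    a ^ 2 * min a 1 ≤ b ^ 2 * min b 1 :=
  mul_le_mul (by nlinarith) (min_le_min hab le_rfl) (le_min ha zero_le_one) (sq_nonneg b)

lemma key4_aux {a b : ℝ} (ha : 0 ≤ a) (hab : a ≤ b) :
    (a + b) ^ 2 * min (a + b) 1 ≤ 4 * (a ^ 2 * min a 1) + 4 * (b ^ 2 * min b 1) := by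
  have hb : 0 ≤ b := le_trans ha hab
  rcases le_total 1 b with h1b | hb1
  · rw [min_eq_right h1b]
    have h2 : (a + b) ^ 2 * min (a + b) 1 ≤ (a + b) ^ 2 :=
      mul_le_of_le_one_right (sq_nonneg _) (min_le_right _ _)
    have h3 : (a + b) ^ 2 ≤ 4 * (b ^ 2 * 1) := by nlinarith
    have h4 : 0 ≤ a ^ 2 * min a 1 := g_nonneg ha
    linarith
  · have ha1 : a ≤ 1 := le_trans hab hb1
    rw [min_eq_left ha1, min_eq_left hb1]
    have hkey : (a + b) ^ 3 ≤ 4 * (a ^ 2 * a) + 4 * (b ^ 2 * b) := by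
      nlinarith [mul_nonneg (add_nonneg ha hb) (sq_nonneg (a - b))]
    rcases le_total (a + b) 1 with hs | hs
    · rw [min_eq_left hs]; nlinarith
    · rw [min_eq_right hs]
      have : (a + b) ^ 2 ≤ (a + b) ^ 3 := by nlinarith
      linarith

lemma key4 {a b : ℝ} (ha : 0 ≤ a) (hb : 0 ≤ b) :
    (a + b) ^ 2 * min (a + b) 1 ≤ 4 * (a ^ 2 * min a 1) + 4 * (b ^ 2 * min b 1) := by
  rcases le_total a b with h | h
  · exact key4_aux ha h
  · have := key4_aux hb h
    rw [add_comm b a] at this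
    linarith

/-- A global linear minorant of `g(x) = x² min(x,1)` whose value at `t` is at least `g(t)/3`. -/
lemma line_exists (t : ℝ) (ht : 0 ≤ t) :
    ∃ α β : ℝ, 0 ≤ α ∧ (∀ x : ℝ, 0 ≤ x → α * x - β ≤ x ^ 2 * min x 1) ∧
      t ^ 2 * min t 1 ≤ 3 * (α * t - β) := by
  rcases le_total t (4/7) with hA | hA
  · refine ⟨3 * t ^ 2, 2 * t ^ 3, by positivity, ?_, ?_⟩
    · intro x hx
      rcases le_total x 1 with hx1 | hx1
      · rw [min_eq_left hx1]
        nlinarith [mul_nonneg (sq_nonneg (x - t)) (by linarith : (0:ℝ) ≤ x + 2 * t)]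
      · rw [min_eq_right hx1]
        have h1 : 3 * t ^ 2 ≤ 1 := by nlinarith
        have h2 : 3 * t ^ 2 * x ≤ x := by nlinarith
        nlinarith [pow_nonneg ht 3, sq_nonneg (x - 1)]
    · rw [min_eq_left (by linarith : t ≤ 1)]
      have : 0 ≤ t ^ 3 := by positivity
      nlinarith
  rcases le_total t (5/2) with hB | hB
  · refine ⟨1, 2/5, zero_le_one, ?_, ?_⟩
    · intro x hx
      rcases le_total x 1 with hx1 | hx1
      · rw [min_eq_left hx1]
        nlinarith [mul_nonneg (sq_nonneg (x - 3/5)) (by linarith : (0:ℝ) ≤ x + 6/5),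
          sq_nonneg (x - 2/5), mul_nonneg hx hx]
      · rw [min_eq_right hx1]
        nlinarith [sq_nonneg (x - 1/2)]
    · rcases le_total t 1 with ht1 | ht1
      · rw [min_eq_left ht1]
        nlinarith [mul_nonneg (by linarith : (0:ℝ) ≤ t - 4/7) (by nlinarith : (0:ℝ) ≤ 1 - t ^ 2),
          mul_nonneg (by linarith : (0:ℝ) ≤ t - 4/7) (by linarith : (0:ℝ) ≤ 1 - t)]
      · rw [min_eq_right ht1]
        nlinarith [mul_nonneg (by linarith : (0:ℝ) ≤ t - 1) (by linarith : (0:ℝ) ≤ 5/2 - t)]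
  · refine ⟨t, t ^ 2 / 3, ht, ?_, ?_⟩
    · intro x hx
      rcases le_total x 1 with hx1 | hx1
      · rw [min_eq_left hx1]
        rcases le_total x (5/6) with hx5 | hx5
        · have h1 : t * x ≤ t ^ 2 / 3 := by nlinarith
          nlinarith [pow_nonneg hx 3]
        · nlinarith [sq_nonneg (t - 3 * x / 2),
            mul_nonneg (mul_nonneg hx hx) (by linarith : (0:ℝ) ≤ x - 3/4)]
      · rw [min_eq_right hx1]
        nlinarith [sq_nonneg (x - t / 2), sq_nonneg t]
    · rw [min_eq_right (by linarith : 1 ≤ t)]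
      nlinarith [sq_nonneg t]

/-- Key expectation bound: if `E X ≥ t ≥ 0` then `g(t) ≤ 3 E g(X)`. -/
lemma mean_bound {Ω : Type*} [MeasureSpace Ω] [IsProbabilityMeasure (ℙ : Measure Ω)]
    (X : Ω → ℝ) (hX0 : ∀ ω, 0 ≤ X ω) (hXi : Integrable X)
    (hgi : Integrable (fun ω => X ω ^ 2 * min (X ω) 1))
    {t : ℝ} (ht : 0 ≤ t) (htX : t ≤ ∫ ω, X ω) :
    t ^ 2 * min t 1 ≤ 3 * ∫ ω, X ω ^ 2 * min (X ω) 1 := by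
  obtain ⟨α, β, hα, hline, hfin⟩ := line_exists t ht
  have h1 : Integrable (fun ω => α * X ω - β) := (hXi.const_mul α).sub (integrable_const β)
  have h2 : ∫ ω, (α * X ω - β) ≤ ∫ ω, X ω ^ 2 * min (X ω) 1 :=
    integral_mono h1 hgi fun ω => hline _ (hX0 ω)
  have h3 : ∫ ω, (α * X ω - β) = α * (∫ ω, X ω) - β := by
    rw [integral_sub (hXi.const_mul α) (integrable_const β), integral_const_mul,
      integral_const]
    simp
  have h4 : α * t - β ≤ α * (∫ ω, X ω) - β := by
    have := mul_le_mul_of_nonneg_left htX hα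
    linarith
  linarith

theorem statement15 {d : ℕ}
    {Ω : Type*} [MeasureSpace Ω] [IsProbabilityMeasure (ℙ : Measure Ω)]
    (Y Z : Ω → Vec d) (hY : Measurable Y) (hZ : Measurable Z)
    (hY2 : Integrable (fun ω => euclNorm (Y ω) ^ 2))
    (hZ2 : Integrable (fun ω => euclNorm (Z ω) ^ 2)) :
    ((∫ ω, euclNorm (Y ω + Z ω) ^ 2 * min (euclNorm (Y ω + Z ω)) 1) ≤
      8 * (∫ ω, euclNorm (Y ω) ^ 2 * min (euclNorm (Y ω)) 1) +
        8 * ∫ ω, euclNorm (Z ω) ^ 2 * min (euclNorm (Z ω)) 1) ∧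
    ((∫ ω, euclNorm (Y ω - ∫ ω', Y ω') ^ 2 * min (euclNorm (Y ω - ∫ ω', Y ω')) 1) ≤
      16 * ∫ ω, euclNorm (Y ω) ^ 2 * min (euclNorm (Y ω)) 1) := by
  -- continuity of g ∘ euclNorm
  have hgc : Continuous (fun x : ℝ => x ^ 2 * min x 1) := by continuity
  -- generic facts for a measurable V with square-integrable norm
  have gen : ∀ (V : Ω → Vec d), Measurable V → Integrable (fun ω => euclNorm (V ω) ^ 2) →
      Integrable (fun ω => euclNorm (V ω)) ∧
      Integrable (fun ω => euclNorm (V ω) ^ 2 * min (euclNorm (V ω)) 1) := by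
    intro V hV hV2
    have hmX : Measurable fun ω => euclNorm (V ω) := euclNorm_continuous.measurable.comp hV
    constructor
    · refine Integrable.mono' ((integrable_const (1:ℝ)).add hV2)
        hmX.aestronglyMeasurable (Filter.Eventually.of_forall fun ω => ?_)
      simp only [Pi.add_apply]
      have h0 := euclNorm_nonneg (V ω)
      rw [Real.norm_eq_abs, abs_of_nonneg h0]
      nlinarith [sq_nonneg (euclNorm (V ω) - 1)]
    · refine Integrable.mono' hV2
        ((hgc.measurable.comp hmX).aestronglyMeasurable) (Filter.Eventually.of_forall fun ω => ?_)
      have h0 := euclNorm_nonneg (V ω)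
      rw [Real.norm_eq_abs, abs_of_nonneg (g_nonneg h0)]
      exact g_le_sq _
  obtain ⟨hYi, hgY⟩ := gen Y hY hY2
  obtain ⟨hZi, hgZ⟩ := gen Z hZ hZ2
  have hintY0 : 0 ≤ ∫ ω, euclNorm (Y ω) ^ 2 * min (euclNorm (Y ω)) 1 :=
    integral_nonneg fun ω => g_nonneg (euclNorm_nonneg _)
  have hintZ0 : 0 ≤ ∫ ω, euclNorm (Z ω) ^ 2 * min (euclNorm (Z ω)) 1 :=
    integral_nonneg fun ω => g_nonneg (euclNorm_nonneg _)
  constructor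
  · -- Part 1
    have hpt : ∀ ω, euclNorm (Y ω + Z ω) ^ 2 * min (euclNorm (Y ω + Z ω)) 1 ≤
        4 * (euclNorm (Y ω) ^ 2 * min (euclNorm (Y ω)) 1) +
        4 * (euclNorm (Z ω) ^ 2 * min (euclNorm (Z ω)) 1) := by
      intro ω
      have tri : euclNorm (Y ω + Z ω) ≤ euclNorm (Y ω) + euclNorm (Z ω) := by
        rw [euclNorm_eq_norm, euclNorm_eq_norm, euclNorm_eq_norm, map_add]
        exact norm_add_le _ _
      exact le_trans (g_mono (euclNorm_nonneg _) tri)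
        (key4 (euclNorm_nonneg _) (euclNorm_nonneg _))
    have hLHSi : Integrable (fun ω =>
        euclNorm (Y ω + Z ω) ^ 2 * min (euclNorm (Y ω + Z ω)) 1) := by
      have hmS : Measurable fun ω => euclNorm (Y ω + Z ω) :=
        euclNorm_continuous.measurable.comp (hY.add hZ)
      refine Integrable.mono' ((hY2.const_mul 2).add (hZ2.const_mul 2))
        ((hgc.measurable.comp hmS).aestronglyMeasurable)
        (Filter.Eventually.of_forall fun ω => ?_)
      simp only [Pi.add_apply]
      have h0 := euclNorm_nonneg (Y ω + Z ω)
      have tri : euclNorm (Y ω + Z ω) ≤ euclNorm (Y ω) + euclNorm (Z ω) := by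
        rw [euclNorm_eq_norm, euclNorm_eq_norm, euclNorm_eq_norm, map_add]
        exact norm_add_le _ _
      rw [Real.norm_eq_abs, abs_of_nonneg (g_nonneg h0)]
      have h1 : euclNorm (Y ω + Z ω) ^ 2 * min (euclNorm (Y ω + Z ω)) 1 ≤
          euclNorm (Y ω + Z ω) ^ 2 := g_le_sq _
      nlinarith [euclNorm_nonneg (Y ω), euclNorm_nonneg (Z ω),
        sq_nonneg (euclNorm (Y ω) - euclNorm (Z ω))]
    have h2 : ∫ ω, euclNorm (Y ω + Z ω) ^ 2 * min (euclNorm (Y ω + Z ω)) 1 ≤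
        ∫ ω, (4 * (euclNorm (Y ω) ^ 2 * min (euclNorm (Y ω)) 1) +
          4 * (euclNorm (Z ω) ^ 2 * min (euclNorm (Z ω)) 1)) :=
      integral_mono hLHSi ((hgY.const_mul 4).add (hgZ.const_mul 4)) hpt
    rw [integral_add (hgY.const_mul 4) (hgZ.const_mul 4), integral_const_mul,
      integral_const_mul] at h2
    linarith
  · -- Part 2
    set μv : Vec d := ∫ ω', Y ω' with hμv
    set t0 : ℝ := euclNorm μv with ht0
    -- Y is (Bochner) integrable
    have hYint : Integrable Y := by
      refine Integrable.mono' ((integrable_const (1:ℝ)).add hY2)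
        hY.aestronglyMeasurable (Filter.Eventually.of_forall fun ω => ?_)
      simp only [Pi.add_apply]
      have h1 := pi_norm_le_euclNorm (Y ω)
      nlinarith [sq_nonneg (euclNorm (Y ω) - 1), euclNorm_nonneg (Y ω)]
    -- the mean's norm is dominated by the mean of the norm
    have htle : t0 ≤ ∫ ω, euclNorm (Y ω) := by
      calc t0 = ‖(EuclideanSpace.equiv (Fin d) ℝ).symm μv‖ := euclNorm_eq_norm μv
        _ = ‖∫ ω, ((EuclideanSpace.equiv (Fin d) ℝ).symm :
              (Fin d → ℝ) →L[ℝ] EuclideanSpace ℝ (Fin d)) (Y ω)‖ := by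
            rw [ContinuousLinearMap.integral_comp_comm _ hYint]
            rfl
        _ ≤ ∫ ω, ‖((EuclideanSpace.equiv (Fin d) ℝ).symm :
              (Fin d → ℝ) →L[ℝ] EuclideanSpace ℝ (Fin d)) (Y ω)‖ :=
            norm_integral_le_integral_norm _
        _ = ∫ ω, euclNorm (Y ω) := by
            refine integral_congr_ae (Filter.Eventually.of_forall fun ω => ?_)
            exact (euclNorm_eq_norm (Y ω)).symm
    have hgt0 : t0 ^ 2 * min t0 1 ≤
        3 * ∫ ω, euclNorm (Y ω) ^ 2 * min (euclNorm (Y ω)) 1 :=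
      mean_bound _ (fun ω => euclNorm_nonneg _) hYi hgY (euclNorm_nonneg μv) htle
    -- pointwise bound
    have hpt : ∀ ω, euclNorm (Y ω - μv) ^ 2 * min (euclNorm (Y ω - μv)) 1 ≤
        4 * (euclNorm (Y ω) ^ 2 * min (euclNorm (Y ω)) 1) + 4 * (t0 ^ 2 * min t0 1) := by
      intro ω
      have tri : euclNorm (Y ω - μv) ≤ euclNorm (Y ω) + t0 := by
        rw [ht0, euclNorm_eq_norm, euclNorm_eq_norm, euclNorm_eq_norm, map_sub]
        exact norm_sub_le _ _
      exact le_trans (g_mono (euclNorm_nonneg _) tri)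
        (key4 (euclNorm_nonneg _) (euclNorm_nonneg _))
    have hLHSi : Integrable (fun ω =>
        euclNorm (Y ω - μv) ^ 2 * min (euclNorm (Y ω - μv)) 1) := by
      have hmS : Measurable fun ω => euclNorm (Y ω - μv) :=
        euclNorm_continuous.measurable.comp (hY.sub measurable_const)
      refine Integrable.mono' ((hY2.const_mul 2).add (integrable_const (2 * t0 ^ 2)))
        ((hgc.measurable.comp hmS).aestronglyMeasurable)
        (Filter.Eventually.of_forall fun ω => ?_)
      simp only [Pi.add_apply]
      have h0 := euclNorm_nonneg (Y ω - μv)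
      have tri : euclNorm (Y ω - μv) ≤ euclNorm (Y ω) + t0 := by
        rw [ht0, euclNorm_eq_norm, euclNorm_eq_norm, euclNorm_eq_norm, map_sub]
        exact norm_sub_le _ _
      rw [Real.norm_eq_abs, abs_of_nonneg (g_nonneg h0)]
      have h1 : euclNorm (Y ω - μv) ^ 2 * min (euclNorm (Y ω - μv)) 1 ≤
          euclNorm (Y ω - μv) ^ 2 := g_le_sq _
      nlinarith [euclNorm_nonneg (Y ω), euclNorm_nonneg μv,
        sq_nonneg (euclNorm (Y ω) - t0)]
    have h2 : ∫ ω, euclNorm (Y ω - μv) ^ 2 * min (euclNorm (Y ω - μv)) 1 ≤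
        ∫ ω, (4 * (euclNorm (Y ω) ^ 2 * min (euclNorm (Y ω)) 1) + 4 * (t0 ^ 2 * min t0 1)) :=
      integral_mono hLHSi ((hgY.const_mul 4).add (integrable_const _)) hpt
    rw [integral_add (hgY.const_mul 4) (integrable_const _), integral_const_mul,
      integral_const] at h2
    simp only [measure_univ, probReal_univ, ENNReal.toReal_one, one_smul, one_mul, smul_eq_mul] at h2
    linarith

end
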